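/- Let θ₀, θ∞, η₀, η∞ be complex constants, set α = −4 η∞ θ∞, β = 4 η₀(1 + θ₀), γ = 4 η∞², δ = −4 η₀², and let U ⊆ ℂ be an open set not containing 0. Suppose x, y : ℂ → ℂ are differentiable on U, satisfy the Filipuk–Żołądek system x'(t) = x² y/t, y'(t) = α − x y²/t + β/x² + γ t x + δ t/x³ on U, and x(t) ≠ 0 on U. Define f(t) = x(t) and g(t) = (x(t)² y(t) + 2 η∞ t x(t)² + (2θ₀+1) x(t) − 2 η₀ t)/(4 x(t)²). Then f, g satisfy the Okamoto Hamiltonian system f'(t) = (4 f² g − 2 η∞ t f² − (1+2θ₀) f + 2 η₀ t)/t and g'(t) = −(4 f g² − (1+2θ₀+4 η∞ t f) g + η∞(θ₀+θ∞) t)/t on U. -/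

import Mathlib

set_option maxHeartbeats 1000000


/-- Under `f = x`, `g = (x²y + 2η∞tx² + (2θ₀+1)x − 2η₀t)/(4x²)`,
solutions of the Filipuk–Żołądek system with `α = −4η∞θ∞`, `β = 4η₀(1+θ₀)`,
`γ = 4η∞²`, `δ = −4η₀²` are mapped to solutions of the Okamoto system for PIII. -/
theorem FZ_to_okamoto (θ₀ θinf η₀ ηinf : ℂ)
    (α β γ δ : ℂ) (hα : α = -4 * ηinf * θinf) (hβ : β = 4 * η₀ * (1 + θ₀))
    (hγ : γ = 4 * ηinf ^ 2) (hδ : δ = -4 * η₀ ^ 2)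
    (U : Set ℂ) (hU : IsOpen U) (hU0 : (0 : ℂ) ∉ U) (x y : ℂ → ℂ)
    (hx : ∀ t ∈ U, HasDerivAt x ((x t) ^ 2 * y t / t) t)
    (hy : ∀ t ∈ U, HasDerivAt y
      (α - x t * (y t) ^ 2 / t + β / (x t) ^ 2 + γ * t * x t + δ * t / (x t) ^ 3) t)
    (hxne : ∀ t ∈ U, x t ≠ 0)
    (f g : ℂ → ℂ)
    (hf : ∀ t, f t = x t)
    (hg : ∀ t, g t =
      ((x t) ^ 2 * y t + 2 * ηinf * t * (x t) ^ 2 + (2 * θ₀ + 1) * x t - 2 * η₀ * t)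
        / (4 * (x t) ^ 2)) :
    ∀ t ∈ U,
      HasDerivAt f
        ((4 * (f t) ^ 2 * g t - 2 * ηinf * t * (f t) ^ 2 - (1 + 2 * θ₀) * f t + 2 * η₀ * t) / t) t ∧
      HasDerivAt g
        (-((4 * f t * (g t) ^ 2 - (1 + 2 * θ₀ + 4 * ηinf * t * f t) * g t
          + ηinf * (θ₀ + θinf) * t) / t)) t := by
  intro t ht
  have hxt : x t ≠ 0 := hxne t ht
  have ht0 : t ≠ 0 := fun h => hU0 (h ▸ ht)
  have hfx : f = x := funext hf
  constructor
  · rw [hfx, hg t]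
    have h := hx t ht
    convert h using 1
    field_simp
    ring
  · -- g agrees near t with an explicit function
    have h1 : HasDerivAt (fun s => y s / 4)
        ((α * t * (x t) ^ 3 - (x t) ^ 4 * (y t) ^ 2 + β * t * x t + γ * t ^ 2 * (x t) ^ 4
          + δ * t ^ 2) / (4 * t * (x t) ^ 3)) t := by
      have e : α - x t * (y t) ^ 2 / t + β / (x t) ^ 2 + γ * t * x t + δ * t / (x t) ^ 3
          = (α * t * (x t) ^ 3 - (x t) ^ 4 * (y t) ^ 2 + β * t * x t + γ * t ^ 2 * (x t) ^ 4
            + δ * t ^ 2) / (t * (x t) ^ 3) := by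
        field_simp
      have h := (hy t ht).div_const 4
      rw [e, div_div] at h
      refine h.congr_deriv ?_
      ring
    have h2 : HasDerivAt (fun s : ℂ => ηinf * s / 2) (ηinf / 2) t := by
      simpa using ((hasDerivAt_id t).const_mul ηinf).div_const 2
    have h3 : HasDerivAt (fun s => (2 * θ₀ + 1) / (4 * x s))
        (-((2 * θ₀ + 1) * y t / (4 * t))) t := by
      refine ((hasDerivAt_const t (2 * θ₀ + 1)).div ((hx t ht).const_mul 4)
        (by simp [hxt])).congr_deriv ?_
      field_simp
      ring
    have h4 : HasDerivAt (fun s => η₀ * s / (2 * (x s) ^ 2))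
        (η₀ / (2 * (x t) ^ 2) - η₀ * y t / x t) t := by
      refine ((((hasDerivAt_id t).const_mul η₀)).div
        (((hx t ht).pow 2).const_mul 2) (by simp [hxt])).congr_deriv ?_
      simp only [Pi.pow_apply, id]
      field_simp
      ring
    have hG := ((h1.add h2).add h3).sub h4
    have heq : g =ᶠ[nhds t] fun s => y s / 4 + ηinf * s / 2 + (2 * θ₀ + 1) / (4 * x s)
        - η₀ * s / (2 * (x s) ^ 2) := by
      filter_upwards [hU.mem_nhds ht] with s hs
      have hxs := hxne s hs
      rw [hg s]
      field_simp
      ring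
    have hG' := hG.congr_of_eventuallyEq heq
    refine hG'.congr_deriv ?_
    symm
    rw [hg t, hα, hβ, hγ, hδ, hf t]
    field_simp
    ring
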